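/- For any formula ψ_{[μ]} built from a class [μ] ∈ 𝔽ₙ as the conjunction (⊥ ⋈₀ X_{σ(1)}) ∧ (X_{σ(1)} ⋈₁ X_{σ(2)}) ∧ ⋯ ∧ (X_{σ(n)} ⋈ₙ ⊤), where ⋈ᵢ is ◁ if ⪯ᵢ is < and ↔ otherwise, the set of classes [ν] ∈ 𝔽ₙ with ν(ψ_{[μ]}) = 1 equals the downset ↓[μ] in the forest 𝔽ₙ. -/

import Mathlib

open unitInterval

/-- The extended value sequence 0, μ(X_{sg(1)}), …, μ(X_{sg(n)}), 1. -/
def seq (n : ℕ) (μ : Fin n → I) (sg : Equiv.Perm (Fin n)) : Fin (n + 2) → I :=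
  fun i =>
    if h0 : (i : ℕ) = 0 then 0
    else if h : (i : ℕ) ≤ n then μ (sg ⟨(i : ℕ) - 1, by omega⟩) else 1

/-- μ ≡ₙ ν : some permutation sorts both, with identical equality/strictness pattern. -/
def nEquiv (n : ℕ) (μ ν : Fin n → I) : Prop :=
  ∃ sg : Equiv.Perm (Fin n),
    Monotone (seq n μ sg) ∧ Monotone (seq n ν sg) ∧
      ∀ i : Fin (n + 1),
        (seq n μ sg i.castSucc = seq n μ sg i.succ ↔
          seq n ν sg i.castSucc = seq n ν sg i.succ)

/-- The forest order on assignments: [μ] ≤ [ν] iff some permutation sorts both, the patterns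
agree up to index k, and μ's relations are equalities afterwards. -/
def leAssign (n : ℕ) (μ ν : Fin n → I) : Prop :=
  ∃ sg : Equiv.Perm (Fin n),
    Monotone (seq n μ sg) ∧ Monotone (seq n ν sg) ∧
      ∃ k : ℕ, k ≤ n ∧
        (∀ i : Fin (n + 1), (i : ℕ) ≤ k →
          (seq n μ sg i.castSucc = seq n μ sg i.succ ↔
            seq n ν sg i.castSucc = seq n ν sg i.succ)) ∧
        (∀ i : Fin (n + 1), k < (i : ℕ) →
          seq n μ sg i.castSucc = seq n μ sg i.succ)

/-- Formulas of Gödel logic over n variables. -/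
inductive Fml (n : ℕ) : Type
  | var : Fin n → Fml n
  | bot : Fml n
  | top : Fml n
  | and : Fml n → Fml n → Fml n
  | or : Fml n → Fml n → Fml n
  | imp : Fml n → Fml n → Fml n
  | neg : Fml n → Fml n

open Classical in
/-- Gödel semantics. -/
noncomputable def eval {n : ℕ} (μ : Fin n → I) : Fml n → I
  | .var i => μ i
  | .bot => 0
  | .top => 1
  | .and a b => min (eval μ a) (eval μ b)
  | .or a b => max (eval μ a) (eval μ b)
  | .imp a b => if eval μ a ≤ eval μ b then 1 else eval μ b
  | .neg a => if eval μ a ≤ (0 : I) then 1 else 0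

def bigOr {n : ℕ} (l : List (Fml n)) : Fml n := l.foldr Fml.or Fml.bot
def bigAnd {n : ℕ} (l : List (Fml n)) : Fml n := l.foldr Fml.and Fml.top

/-- The derived connective α ◁ β := (β → α) → β. -/
def tri {n : ℕ} (a b : Fml n) : Fml n := .imp (.imp b a) b

def iffF {n : ℕ} (a b : Fml n) : Fml n := .and (.imp a b) (.imp b a)

def fmlTerm {n : ℕ} (sg : Equiv.Perm (Fin n)) : Fin (n + 2) → Fml n := fun i =>
  if h0 : (i : ℕ) = 0 then .bot
  else if h : (i : ℕ) ≤ n then .var (sg ⟨(i : ℕ) - 1, by omega⟩) else .top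

open Classical in
/-- The normal-form formula ψ_{[μ]}. -/
noncomputable def psi {n : ℕ} (μ : Fin n → I) (sg : Equiv.Perm (Fin n)) : Fml n :=
  bigAnd ((List.finRange (n + 1)).map fun i =>
    if seq n μ sg i.castSucc = seq n μ sg i.succ then
      iffF (fmlTerm sg i.castSucc) (fmlTerm sg i.succ)
    else tri (fmlTerm sg i.castSucc) (fmlTerm sg i.succ))


section Aux
variable {n : ℕ}

lemma eval_and (ν : Fin n → I) (a b : Fml n) :
    eval ν (.and a b) = min (eval ν a) (eval ν b) := rfl

lemma eval_imp_def (ν : Fin n → I) (a b : Fml n) :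
    eval ν (.imp a b) = if eval ν a ≤ eval ν b then 1 else eval ν b := rfl

lemma eval_top (ν : Fin n → I) : eval ν (.top : Fml n) = 1 := rfl

lemma I_zero_ne_one : (0 : I) ≠ 1 := by
  intro hc; have := congrArg Subtype.val hc; norm_num at this

lemma min_eq_one_iff {a b : I} : min a b = 1 ↔ a = 1 ∧ b = 1 := by
  constructor
  · intro hm
    have h1 : (1:I) ≤ a := by rw [← hm]; exact min_le_left a b
    have h2 : (1:I) ≤ b := by rw [← hm]; exact min_le_right a b
    exact ⟨le_antisymm le_one' h1, le_antisymm le_one' h2⟩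
  · rintro ⟨h1, h2⟩; rw [h1, h2, min_self]

lemma seq_at (μ : Fin n → I) (sg : Equiv.Perm (Fin n)) (m : ℕ) (hm : m < n)
    (pf : m + 1 < n + 2) : seq n μ sg ⟨m + 1, pf⟩ = μ (sg ⟨m, hm⟩) := by
  unfold seq
  rw [dif_neg (Nat.succ_ne_zero m), dif_pos (show ((⟨m+1, pf⟩ : Fin (n+2)) : ℕ) ≤ n from hm)]
  rfl

lemma seq_top' (μ : Fin n → I) (sg : Equiv.Perm (Fin n)) (pf : n + 1 < n + 2) :
    seq n μ sg ⟨n + 1, pf⟩ = 1 := by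
  unfold seq
  rw [dif_neg (Nat.succ_ne_zero n), dif_neg (Nat.not_succ_le_self n)]

lemma mono_inner {μ : Fin n → I} {sg : Equiv.Perm (Fin n)} (h : Monotone (seq n μ sg)) :
    Monotone (μ ∘ ⇑sg) := by
  intro j j' hle
  have hv : (j : ℕ) ≤ (j' : ℕ) := hle
  have h2 : seq n μ sg ⟨(j:ℕ)+1, by have := j.2; omega⟩ ≤
      seq n μ sg ⟨(j':ℕ)+1, by have := j'.2; omega⟩ :=
    h (show (j:ℕ)+1 ≤ (j':ℕ)+1 by omega)
  rwa [seq_at μ sg _ j.2, seq_at μ sg _ j'.2, Fin.eta, Fin.eta] at h2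

lemma seq_eq_of_monotone {μ : Fin n → I} {sg sg' : Equiv.Perm (Fin n)}
    (h : Monotone (seq n μ sg)) (h' : Monotone (seq n μ sg')) :
    seq n μ sg = seq n μ sg' := by
  have key : μ ∘ ⇑sg = μ ∘ ⇑sg' := Tuple.unique_monotone (mono_inner h) (mono_inner h')
  funext i
  unfold seq
  by_cases h0 : (i:ℕ) = 0
  · rw [dif_pos h0, dif_pos h0]
  by_cases h1 : (i:ℕ) ≤ n
  · rw [dif_neg h0, dif_pos h1, dif_neg h0, dif_pos h1]
    exact congrFun key ⟨(i:ℕ)-1, by omega⟩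
  · rw [dif_neg h0, dif_neg h1, dif_neg h0, dif_neg h1]

lemma eq_of_steps (f : Fin (n+2) → I) (d : ℕ) : ∀ (p : ℕ) (hp : p + d < n + 2),
    (∀ i : Fin (n+1), p ≤ (i:ℕ) → (i:ℕ) < p + d → f i.castSucc = f i.succ) →
    f ⟨p, by omega⟩ = f ⟨p + d, hp⟩ := by
  induction d with
  | zero => intro p hp _; rfl
  | succ d ih =>
    intro p hp hstep
    have h1 := ih p (by omega) (fun i a b => hstep i a (by omega))
    have h2 : f (Fin.castSucc ⟨p + d, by omega⟩) = f (Fin.succ ⟨p + d, by omega⟩) :=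
      hstep ⟨p + d, by omega⟩ (show p ≤ p + d by omega) (show p + d < p + (d+1) by omega)
    exact h1.trans h2

lemma eq_of_steps' (f : Fin (n+2) → I) (p q : Fin (n+2)) (hpq : p ≤ q)
    (hstep : ∀ i : Fin (n+1), (p:ℕ) ≤ (i:ℕ) → (i:ℕ) < (q:ℕ) → f i.castSucc = f i.succ) :
    f p = f q := by
  have hv : (p:ℕ) ≤ (q:ℕ) := hpq
  have hh := eq_of_steps f ((q:ℕ) - (p:ℕ)) (p:ℕ) (by omega)
    (fun i a b => hstep i a (by omega))
  convert hh using 2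
  exact Fin.ext (show (q:ℕ) = (p:ℕ) + ((q:ℕ)-(p:ℕ)) by omega)

lemma const_of_level {μ ν : Fin n → I} {sg : Equiv.Perm (Fin n)}
    (hm : Monotone (seq n μ sg))
    (hc : ∀ i : Fin (n+1), seq n μ sg i.castSucc = seq n μ sg i.succ →
        seq n ν sg i.castSucc = seq n ν sg i.succ)
    (p q : Fin (n+2)) (hpq : p ≤ q) (heq : seq n μ sg p = seq n μ sg q) :
    seq n ν sg p = seq n ν sg q := by
  refine eq_of_steps' _ p q hpq ?_
  intro i h1 h2
  apply hc
  have hc1 : p ≤ i.castSucc := by rw [Fin.le_def, Fin.coe_castSucc]; exact h1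
  have hc2 : i.succ ≤ q := by rw [Fin.le_def, Fin.val_succ]; exact h2
  have a1 : seq n μ sg p ≤ seq n μ sg i.castSucc := hm hc1
  have a2 : seq n μ sg i.succ ≤ seq n μ sg q := hm hc2
  have a3 : seq n μ sg i.castSucc ≤ seq n μ sg i.succ := hm (Fin.castSucc_lt_succ : i.castSucc < i.succ).le
  rw [heq] at a1
  exact le_antisymm a3 (a2.trans a1)

lemma seq_nu_eq {μ ν : Fin n → I} {sg sg' : Equiv.Perm (Fin n)}
    (hμ : Monotone (seq n μ sg)) (hμ' : Monotone (seq n μ sg'))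
    (hc : ∀ i : Fin (n+1), seq n μ sg' i.castSucc = seq n μ sg' i.succ →
        seq n ν sg' i.castSucc = seq n ν sg' i.succ) :
    seq n ν sg = seq n ν sg' := by
  have hμeq : seq n μ sg = seq n μ sg' := seq_eq_of_monotone hμ hμ'
  funext i
  by_cases h0 : (i:ℕ) = 0
  · show seq n ν sg i = seq n ν sg' i
    unfold seq; rw [dif_pos h0, dif_pos h0]
  by_cases h1 : (i:ℕ) ≤ n
  · set j : Fin n := sg ⟨(i:ℕ)-1, by omega⟩ with hj
    set q : Fin (n+2) := ⟨((sg'⁻¹ j : Fin n) : ℕ) + 1, by have := (sg'⁻¹ j).2; omega⟩ with hqdef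
    have hq : seq n ν sg' q = ν j := by
      rw [hqdef, seq_at ν sg' _ (sg'⁻¹ j).2]
      simp
    have hqμ : seq n μ sg' q = μ j := by
      rw [hqdef, seq_at μ sg' _ (sg'⁻¹ j).2]
      simp
    have hiν : seq n ν sg i = ν j := by
      unfold seq; rw [dif_neg h0, dif_pos h1, hj]
    have hiμ' : seq n μ sg' i = μ j := by
      rw [← hμeq]; unfold seq; rw [dif_neg h0, dif_pos h1, hj]
    have hlev : seq n μ sg' q = seq n μ sg' i := by rw [hqμ, hiμ']
    rw [hiν, ← hq]
    rcases le_total q i with hle | hle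
    · exact const_of_level hμ' hc q i hle hlev
    · exact (const_of_level hμ' hc i q hle hlev.symm).symm
  · show seq n ν sg i = seq n ν sg' i
    unfold seq; rw [dif_neg h0, dif_neg h1, dif_neg h0, dif_neg h1]

lemma eval_imp_eq_one (ν : Fin n → I) (a b : Fml n) :
    eval ν (.imp a b) = 1 ↔ eval ν a ≤ eval ν b := by
  rw [eval_imp_def]
  split_ifs with hle
  · simpa using hle
  · constructor
    · intro h1; exact absurd (le_one'.trans_eq h1.symm) hle
    · intro h1; exact absurd h1 hle

lemma eval_fmlTerm (ν : Fin n → I) (sg : Equiv.Perm (Fin n)) (i : Fin (n+2)) :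
    eval ν (fmlTerm sg i) = seq n ν sg i := by
  unfold fmlTerm seq
  by_cases h0 : (i:ℕ) = 0
  · rw [dif_pos h0, dif_pos h0]; rfl
  by_cases h1 : (i:ℕ) ≤ n
  · rw [dif_neg h0, dif_pos h1, dif_neg h0, dif_pos h1]; rfl
  · rw [dif_neg h0, dif_neg h1, dif_neg h0, dif_neg h1]; rfl

lemma eval_iffF_eq_one (ν : Fin n → I) (a b : Fml n) :
    eval ν (iffF a b) = 1 ↔ eval ν a = eval ν b := by
  unfold iffF
  rw [eval_and, min_eq_one_iff, eval_imp_eq_one, eval_imp_eq_one]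
  exact ⟨fun ⟨h1, h2⟩ => le_antisymm h1 h2, fun hx => ⟨hx.le, hx.ge⟩⟩

lemma eval_tri_eq_one (ν : Fin n → I) (a b : Fml n) :
    eval ν (tri a b) = 1 ↔ eval ν a < eval ν b ∨ eval ν b = 1 := by
  unfold tri
  rcases le_or_gt (eval ν b) (eval ν a) with hba | hba
  · have h1 : eval ν (Fml.imp b a) = 1 := (eval_imp_eq_one ν b a).mpr hba
    rw [eval_imp_def, h1]
    by_cases hb : eval ν b = 1
    · rw [if_pos (hb ▸ le_refl (1:I))]
      simp [hb]
    · rw [if_neg (fun hle => hb (le_antisymm le_one' hle))]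
      constructor
      · intro h2; exact Or.inr h2
      · rintro (h2 | h2)
        · exact absurd h2 (not_lt.mpr hba)
        · exact h2
  · rw [eval_imp_def, eval_imp_def, if_neg (not_le.mpr hba), if_pos hba.le]
    simp [hba]

lemma eval_bigAnd_eq_one (ν : Fin n → I) (l : List (Fml n)) :
    eval ν (bigAnd l) = 1 ↔ ∀ a ∈ l, eval ν a = 1 := by
  induction l with
  | nil => simp [bigAnd, eval_top]
  | cons x xs ih =>
    rw [show bigAnd (x :: xs) = Fml.and x (bigAnd xs) from rfl, eval_and, min_eq_one_iff, ih]
    simp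

lemma psi_eval_iff (μ ν : Fin n → I) (sg : Equiv.Perm (Fin n)) :
    eval ν (psi μ sg) = 1 ↔ ∀ i : Fin (n+1),
      (seq n μ sg i.castSucc = seq n μ sg i.succ →
        seq n ν sg i.castSucc = seq n ν sg i.succ) ∧
      (seq n μ sg i.castSucc ≠ seq n μ sg i.succ →
        (seq n ν sg i.castSucc < seq n ν sg i.succ ∨ seq n ν sg i.succ = 1)) := by
  unfold psi
  rw [eval_bigAnd_eq_one]
  constructor
  · intro H i
    have hmem := H _ (List.mem_map.mpr ⟨i, List.mem_finRange i, rfl⟩)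
    by_cases hμ : seq n μ sg i.castSucc = seq n μ sg i.succ
    · rw [if_pos hμ, eval_iffF_eq_one, eval_fmlTerm, eval_fmlTerm] at hmem
      exact ⟨fun _ => hmem, fun hcon => absurd hμ hcon⟩
    · rw [if_neg hμ, eval_tri_eq_one, eval_fmlTerm, eval_fmlTerm] at hmem
      exact ⟨fun hcon => absurd hcon hμ, fun _ => hmem⟩
  · intro H a ha
    obtain ⟨i, -, rfl⟩ := List.mem_map.mp ha
    by_cases hμ : seq n μ sg i.castSucc = seq n μ sg i.succ
    · rw [if_pos hμ, eval_iffF_eq_one, eval_fmlTerm, eval_fmlTerm]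
      exact (H i).1 hμ
    · rw [if_neg hμ, eval_tri_eq_one, eval_fmlTerm, eval_fmlTerm]
      exact (H i).2 hμ

end Aux

theorem eval_psi_eq_one_iff_le {n : ℕ} (μ : Fin n → I) (sg : Equiv.Perm (Fin n))
    (h : Monotone (seq n μ sg)) (ν : Fin n → I) :
    eval ν (psi μ sg) = 1 ↔ leAssign n ν μ := by
  rw [psi_eval_iff]
  constructor
  · intro H
    have hstep : ∀ i : Fin (n+1), seq n ν sg i.castSucc ≤ seq n ν sg i.succ := by
      intro i
      by_cases hμe : seq n μ sg i.castSucc = seq n μ sg i.succ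
      · exact ((H i).1 hμe).le
      · rcases (H i).2 hμe with h' | h'
        · exact h'.le
        · rw [h']; exact le_one'
    have hmono : Monotone (seq n ν sg) := Fin.monotone_iff_le_succ.mpr hstep
    classical
    have hex : ∃ m, ∃ hm : m + 1 < n + 2, seq n ν sg ⟨m+1, hm⟩ = 1 :=
      ⟨n, by omega, seq_top' ν sg _⟩
    obtain ⟨hk1, hk2⟩ := Nat.find_spec hex
    have hkn : Nat.find hex ≤ n := Nat.find_le ⟨by omega, seq_top' ν sg _⟩
    have hne : ∀ m (hm : m + 1 < n + 2), m < Nat.find hex → seq n ν sg ⟨m+1, hm⟩ ≠ 1 := by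
      intro m hm hmk hcon
      exact Nat.find_min hex hmk ⟨hm, hcon⟩
    have hone : ∀ p : Fin (n+2), Nat.find hex + 1 ≤ (p:ℕ) → seq n ν sg p = 1 := by
      intro p hp
      refine le_antisymm le_one' ?_
      calc (1:I) = seq n ν sg ⟨Nat.find hex + 1, hk1⟩ := hk2.symm
        _ ≤ seq n ν sg p := hmono (by rw [Fin.le_def]; exact hp)
    refine ⟨sg, hmono, h, Nat.find hex, hkn, ?_, ?_⟩
    · intro i hik
      rcases lt_or_eq_of_le hik with hlt | heq
      · constructor
        · intro hνe
          by_contra hμne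
          rcases (H i).2 hμne with h' | h'
          · exact absurd hνe (ne_of_lt h')
          · exact hne (i:ℕ) (by have := i.2; omega) hlt h'
        · exact (H i).1
      · have hsucc1 : seq n ν sg i.succ = 1 := by
          apply hone; rw [Fin.val_succ]; omega
        have hcast : seq n ν sg i.castSucc ≠ 1 := by
          rcases Nat.eq_zero_or_pos (Nat.find hex) with h0 | h0
          · have hz : seq n ν sg i.castSucc = 0 := by
              unfold seq
              rw [dif_pos (show ((i.castSucc : Fin (n+2)) : ℕ) = 0 by rw [Fin.coe_castSucc]; omega)]
            rw [hz]; exact I_zero_ne_one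
          · intro hcon
            refine hne (Nat.find hex - 1) (by omega) (by omega) ?_
            have hcs : (⟨(Nat.find hex - 1) + 1, by omega⟩ : Fin (n+2)) = i.castSucc := by
              apply Fin.ext; rw [Fin.coe_castSucc]
              show Nat.find hex - 1 + 1 = (i:ℕ)
              omega
            rw [hcs]; exact hcon
        have hνne : seq n ν sg i.castSucc ≠ seq n ν sg i.succ := by
          rw [hsucc1]; exact hcast
        have hμne : seq n μ sg i.castSucc ≠ seq n μ sg i.succ := by
          intro hcon; exact hνne ((H i).1 hcon)
        exact iff_of_false hνne hμne
    · intro i hki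
      have h1 : seq n ν sg i.castSucc = 1 := hone _ (by rw [Fin.coe_castSucc]; omega)
      have h2 : seq n ν sg i.succ = 1 := hone _ (by rw [Fin.val_succ]; omega)
      rw [h1, h2]
  · rintro ⟨sg', hν', hμ', k, hkn, hiff, hafter⟩
    have hc : ∀ i : Fin (n+1), seq n μ sg' i.castSucc = seq n μ sg' i.succ →
        seq n ν sg' i.castSucc = seq n ν sg' i.succ := by
      intro i hμe
      rcases le_or_gt ((i:ℕ)) k with hik | hik
      · exact (hiff i hik).mpr hμe
      · exact hafter i hik
    have hμeq : seq n μ sg = seq n μ sg' := seq_eq_of_monotone h hμ'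
    have hνeq : seq n ν sg = seq n ν sg' := seq_nu_eq h hμ' hc
    intro i
    constructor
    · intro hμe
      rw [hμeq] at hμe
      rw [hνeq]
      exact hc i hμe
    · intro hμne
      rw [hμeq] at hμne
      rw [hνeq]
      rcases le_or_gt ((i:ℕ)) k with hik | hik
      · left
        refine lt_of_le_of_ne (hν' (Fin.castSucc_lt_succ : i.castSucc < i.succ).le) ?_
        intro he
        exact hμne ((hiff i hik).mp he)
      · right
        have hlast : seq n ν sg' ⟨n+1, by omega⟩ = 1 := seq_top' ν sg' _
        rw [← hlast]
        refine eq_of_steps' (seq n ν sg') i.succ ⟨n+1, by omega⟩ i.2 ?_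
        intro jj hj1 hj2
        apply hafter
        rw [Fin.val_succ] at hj1
        omega
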